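/- Let A, B, C be groupoids with wide subgroupoids A₋ ⊆ A, B₋ ⊆ B, B₊ ⊆ B, C₊ ⊆ C; let S be a groupoid with a functor (∂_A, ∂_B) : S → A × B and T a groupoid with a functor (∂_B, ∂_C) : T → B × C; and fix objects â of A, b̂ of B, ĉ of C. Assume: (i) [unique synchronization] for all objects s of S, t of T and every morphism θ : ∂_B(s) → ∂_B(t) in B, there are unique s', t' and unique φ : s → s' in S and ψ : t' → t in T with ∂_A(φ) in A₋, ∂_C(ψ) in C₊, ∂_B(s') = ∂_B(t') and θ = ∂_B(ψ) ∘ ∂_B(φ); (ii) S has the lifting property with respect to (A₋, B₊): for all (θ_A⁻ : a → ∂_A(s) in A₋, θ_B⁺ : ∂_B(s) → b in B₊) and all Ω_A : a' → a, Ω_B : b → b' in A, B, there are unique φ : s → s' in S, ϑ_A⁻ in A₋ and ϑ_B⁺ in B₊ with ϑ_A⁻ = ∂_A(φ) ∘ θ_A⁻ ∘ Ω_A and Ω_B ∘ θ_B⁺ = ϑ_B⁺ ∘ ∂_B(φ); and (iii) T has the analogous lifting property with respect to (B₋, C₊). Define: W_S = { (θ_A⁻, s, θ_B⁺) | θ_A⁻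 : â → ∂_A(s) in A₋, θ_B⁺ : ∂_B(s) → b̂ in B₊ }, W_T = { (θ_B⁻, t, θ_C⁺) | θ_B⁻ : b̂ → ∂_B(t) in B₋, θ_C⁺ : ∂_C(t) → ĉ in C₊ }, and W_{S,T} = { (θ_A⁻, s, Θ, t, θ_C⁺) | θ_A⁻ : â → ∂_A(s) in A₋, ∂_B(s) = ∂_B(t), Θ : b̂ → ∂_B(s) in B, θ_C⁺ : ∂_C(t) → ĉ in C₊ }. Then there is a bijection Υ : W_S × W_T ≅ W_{S,T} such that whenever Υ((θ_A⁻, s, θ_B⁺), (Ω_B⁻, t, Ω_C⁺)) = (ψ_A⁻, s', Θ, t', ψ_C⁺), there are unique ω : s → s' in S and ν : t → t' in T with: ψ_A⁻ = ∂_A(ω) ∘ θ_A⁻, Θ = ∂_B(ω) ∘ (θ_B⁺)⁻¹ = ∂_B(ν) ∘ Ω_B⁻, and Ω_C⁺ = ψ_C⁺ ∘ ∂_C(ν). -/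

import Mathlib

open CategoryTheory

/-- A `∼`-witness of a span `(dL, dR) : S ⥤ A × B` at representatives `ahat`, `bhat`:
an object `s` together with a negative symmetry `ahat ⟶ dL s` and a positive symmetry
`dR s ⟶ bhat`. -/
structure SimWit {A B S : Type*} [Groupoid A] [Groupoid B] [Groupoid S]
    (Aneg : Subgroupoid A) (Bpos : Subgroupoid B)
    (dL : S ⥤ A) (dR : S ⥤ B) (ahat : A) (bhat : B) : Type _ where
  s : S
  θL : ahat ⟶ dL.obj s
  θR : dR.obj s ⟶ bhat
  hL : θL ∈ Aneg.arrows ahat (dL.obj s)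
  hR : θR ∈ Bpos.arrows (dR.obj s) bhat

/-- A `∼`-interaction witness of composable spans `S` (over `A × B`) and `T` (over
`B × C`) at representatives `ahat`, `bhat`, `chat`. -/
structure SimIWit {A B C S T : Type*}
    [Groupoid A] [Groupoid B] [Groupoid C] [Groupoid S] [Groupoid T]
    (Aneg : Subgroupoid A) (Cpos : Subgroupoid C)
    (dA : S ⥤ A) (dBS : S ⥤ B) (dBT : T ⥤ B) (dC : T ⥤ C)
    (ahat : A) (bhat : B) (chat : C) : Type _ where
  s : S
  t : T
  θA : ahat ⟶ dA.obj s
  hA : θA ∈ Aneg.arrows ahat (dA.obj s)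
  eqB : dBS.obj s = dBT.obj t
  Θ : bhat ⟶ dBS.obj s
  θC : dC.obj t ⟶ chat
  hC : θC ∈ Cpos.arrows (dC.obj t) chat

section Helpers
variable {A B C S T : Type*} [Groupoid A] [Groupoid B] [Groupoid C] [Groupoid S] [Groupoid T]

lemma map_ginv {X Y : Type*} [Groupoid X] [Groupoid Y] (F : X ⥤ Y) {x y : X} (f : x ⟶ y) :
    F.map (Groupoid.inv f) = Groupoid.inv (F.map f) := by
  simp [Groupoid.inv_eq_inv, Functor.map_inv]

lemma sig2_ext {s : S} {t : T} {X Y : Σ (s' : S) (t' : T), (s ⟶ s') × (t' ⟶ t)} (h : X = Y) :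
    ∃ (h1 : X.1 = Y.1) (h2 : X.2.1 = Y.2.1),
      Y.2.2.1 = X.2.2.1 ≫ eqToHom h1 ∧ Y.2.2.2 = eqToHom h2.symm ≫ X.2.2.2 := by
  subst h; exact ⟨rfl, rfl, by simp, by simp⟩

lemma sig3_ext {F : S ⥤ A} {G : S ⥤ B} {x : S} {a : A} {b : B}
    {X Y : Σ s' : S, (x ⟶ s') × (a ⟶ F.obj s') × (G.obj s' ⟶ b)} (h : X = Y) :
    ∃ h1 : X.1 = Y.1, Y.2.1 = X.2.1 ≫ eqToHom h1 ∧
      Y.2.2.1 = X.2.2.1 ≫ eqToHom (congrArg F.obj h1) ∧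
      Y.2.2.2 = eqToHom (congrArg G.obj h1).symm ≫ X.2.2.2 := by
  subst h; exact ⟨rfl, by simp, by simp, by simp⟩

lemma SimWit.ext' {Aneg : Subgroupoid A} {Bpos : Subgroupoid B} {dL : S ⥤ A} {dR : S ⥤ B}
    {ahat : A} {bhat : B} {X Y : SimWit Aneg Bpos dL dR ahat bhat} (hs : X.s = Y.s)
    (h1 : X.θL ≫ eqToHom (congrArg dL.obj hs) = Y.θL)
    (h2 : X.θR = eqToHom (congrArg dR.obj hs) ≫ Y.θR) : X = Y := by
  obtain ⟨s, θL, θR, hL, hR⟩ := X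
  obtain ⟨s', θL', θR', hL', hR'⟩ := Y
  dsimp at hs; subst hs
  simp only [eqToHom_refl, Category.comp_id, Category.id_comp] at h1 h2
  subst h1; subst h2; rfl

lemma SimIWit.ext' {Aneg : Subgroupoid A} {Cpos : Subgroupoid C}
    {dA : S ⥤ A} {dBS : S ⥤ B} {dBT : T ⥤ B} {dC : T ⥤ C} {ahat : A} {bhat : B} {chat : C}
    {X Y : SimIWit Aneg Cpos dA dBS dBT dC ahat bhat chat}
    (hs : X.s = Y.s) (ht : X.t = Y.t)
    (h1 : X.θA ≫ eqToHom (congrArg dA.obj hs) = Y.θA)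
    (h2 : X.Θ ≫ eqToHom (congrArg dBS.obj hs) = Y.Θ)
    (h3 : X.θC = eqToHom (congrArg dC.obj ht) ≫ Y.θC) : X = Y := by
  obtain ⟨s, t, θA, hA, eqB, Θ, θC, hC⟩ := X
  obtain ⟨s', t', θA', hA', eqB', Θ', θC', hC'⟩ := Y
  dsimp at hs ht; subst hs; subst ht
  simp only [eqToHom_refl, Category.comp_id, Category.id_comp] at h1 h2 h3
  subst h1; subst h2; subst h3; rfl

end Helpers

section Main
variable {A B C S T : Type*} [Groupoid A] [Groupoid B] [Groupoid C] [Groupoid S] [Groupoid T]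
  (Aneg : Subgroupoid A) (Bneg Bpos : Subgroupoid B) (Cpos : Subgroupoid C)
  (dA : S ⥤ A) (dBS : S ⥤ B) (dBT : T ⥤ B) (dC : T ⥤ C)
  (ahat : A) (bhat : B) (chat : C)

/-- The forward map `W_S × W_T → W_{S,T}`. -/
noncomputable def iwF
    (hsync : ∀ (s : S) (t : T) (θ : dBS.obj s ⟶ dBT.obj t),
      ∃! p : Σ (s' : S) (t' : T), (s ⟶ s') × (t' ⟶ t),
        dA.map p.2.2.1 ∈ Aneg.arrows _ _ ∧ dC.map p.2.2.2 ∈ Cpos.arrows _ _ ∧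
        ∃ h : dBS.obj p.1 = dBT.obj p.2.1,
          θ = dBS.map p.2.2.1 ≫ eqToHom h ≫ dBT.map p.2.2.2)
    (w : SimWit Aneg Bpos dA dBS ahat bhat × SimWit Bneg Cpos dBT dC bhat chat) :
    SimIWit Aneg Cpos dA dBS dBT dC ahat bhat chat where
  s := (hsync w.1.s w.2.s (w.1.θR ≫ w.2.θL)).choose.1
  t := (hsync w.1.s w.2.s (w.1.θR ≫ w.2.θL)).choose.2.1
  θA := w.1.θL ≫ dA.map (hsync w.1.s w.2.s (w.1.θR ≫ w.2.θL)).choose.2.2.1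
  hA := Aneg.mul w.1.hL (hsync w.1.s w.2.s (w.1.θR ≫ w.2.θL)).choose_spec.1.1
  eqB := (hsync w.1.s w.2.s (w.1.θR ≫ w.2.θL)).choose_spec.1.2.2.choose
  Θ := Groupoid.inv w.1.θR ≫ dBS.map (hsync w.1.s w.2.s (w.1.θR ≫ w.2.θL)).choose.2.2.1
  θC := dC.map (hsync w.1.s w.2.s (w.1.θR ≫ w.2.θL)).choose.2.2.2 ≫ w.2.θR
  hC := Cpos.mul (hsync w.1.s w.2.s (w.1.θR ≫ w.2.θL)).choose_spec.1.2.1 w.2.hR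

/-- The inverse map `W_{S,T} → W_S × W_T`. -/
noncomputable def iwG
    (hBnw : Bneg.IsWide) (hBpw : Bpos.IsWide)
    (hliftS : ∀ (s : S) (a : A) (b : B) (θA : a ⟶ dA.obj s) (θB : dBS.obj s ⟶ b),
      θA ∈ Aneg.arrows _ _ → θB ∈ Bpos.arrows _ _ →
      ∀ (a' : A) (b' : B) (ΩA : a' ⟶ a) (ΩB : b ⟶ b'),
        ∃! p : Σ s' : S, (s ⟶ s') × (a' ⟶ dA.obj s') × (dBS.obj s' ⟶ b'),
          p.2.2.1 ∈ Aneg.arrows a' (dA.obj p.1) ∧ p.2.2.2 ∈ Bpos.arrows (dBS.obj p.1) b' ∧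
          p.2.2.1 = ΩA ≫ θA ≫ dA.map p.2.1 ∧ θB ≫ ΩB = dBS.map p.2.1 ≫ p.2.2.2)
    (hliftT : ∀ (t : T) (b : B) (c : C) (θB : b ⟶ dBT.obj t) (θC : dC.obj t ⟶ c),
      θB ∈ Bneg.arrows _ _ → θC ∈ Cpos.arrows _ _ →
      ∀ (b' : B) (c' : C) (ΩB : b' ⟶ b) (ΩC : c ⟶ c'),
        ∃! p : Σ t' : T, (t ⟶ t') × (b' ⟶ dBT.obj t') × (dC.obj t' ⟶ c'),
          p.2.2.1 ∈ Bneg.arrows b' (dBT.obj p.1) ∧ p.2.2.2 ∈ Cpos.arrows (dC.obj p.1) c' ∧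
          p.2.2.1 = ΩB ≫ θB ≫ dBT.map p.2.1 ∧ θC ≫ ΩC = dC.map p.2.1 ≫ p.2.2.2)
    (W : SimIWit Aneg Cpos dA dBS dBT dC ahat bhat chat) :
    SimWit Aneg Bpos dA dBS ahat bhat × SimWit Bneg Cpos dBT dC bhat chat :=
  letI L₁ := hliftS W.s ahat (dBS.obj W.s) W.θA (𝟙 _) W.hA (hBpw.id_mem _)
    ahat bhat (𝟙 ahat) (Groupoid.inv W.Θ)
  letI L₂ := hliftT W.t (dBT.obj W.t) chat (𝟙 _) W.θC (hBnw.id_mem _) W.hC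
    bhat chat (W.Θ ≫ eqToHom W.eqB) (𝟙 chat)
  (⟨L₁.choose.1, L₁.choose.2.2.1, L₁.choose.2.2.2, L₁.choose_spec.1.1, L₁.choose_spec.1.2.1⟩,
   ⟨L₂.choose.1, L₂.choose.2.2.1, L₂.choose.2.2.2, L₂.choose_spec.1.1, L₂.choose_spec.1.2.1⟩)

end Main

section Compat
variable {A B C S T : Type*} [Groupoid A] [Groupoid B] [Groupoid C] [Groupoid S] [Groupoid T]
  {Aneg : Subgroupoid A} {Bneg Bpos : Subgroupoid B} {Cpos : Subgroupoid C}
  {dA : S ⥤ A} {dBS : S ⥤ B} {dBT : T ⥤ B} {dC : T ⥤ C}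
  {ahat : A} {bhat : B} {chat : C}

theorem iwF_compat
    (hsync : ∀ (s : S) (t : T) (θ : dBS.obj s ⟶ dBT.obj t),
      ∃! p : Σ (s' : S) (t' : T), (s ⟶ s') × (t' ⟶ t),
        dA.map p.2.2.1 ∈ Aneg.arrows _ _ ∧ dC.map p.2.2.2 ∈ Cpos.arrows _ _ ∧
        ∃ h : dBS.obj p.1 = dBT.obj p.2.1,
          θ = dBS.map p.2.2.1 ≫ eqToHom h ≫ dBT.map p.2.2.2)
    (w₁ : SimWit Aneg Bpos dA dBS ahat bhat) (w₂ : SimWit Bneg Cpos dBT dC bhat chat) :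
    ∃! p : (w₁.s ⟶ (iwF Aneg Bneg Bpos Cpos dA dBS dBT dC ahat bhat chat hsync (w₁, w₂)).s) ×
        (w₂.s ⟶ (iwF Aneg Bneg Bpos Cpos dA dBS dBT dC ahat bhat chat hsync (w₁, w₂)).t),
      (iwF Aneg Bneg Bpos Cpos dA dBS dBT dC ahat bhat chat hsync (w₁, w₂)).θA
          = w₁.θL ≫ dA.map p.1 ∧
      (iwF Aneg Bneg Bpos Cpos dA dBS dBT dC ahat bhat chat hsync (w₁, w₂)).Θ
          = Groupoid.inv w₁.θR ≫ dBS.map p.1 ∧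
      (iwF Aneg Bneg Bpos Cpos dA dBS dBT dC ahat bhat chat hsync (w₁, w₂)).Θ
          ≫ eqToHom (iwF Aneg Bneg Bpos Cpos dA dBS dBT dC ahat bhat chat hsync (w₁, w₂)).eqB
          = w₂.θL ≫ dBT.map p.2 ∧
      w₂.θR = dC.map p.2
          ≫ (iwF Aneg Bneg Bpos Cpos dA dBS dBT dC ahat bhat chat hsync (w₁, w₂)).θC := by
  dsimp only [iwF]
  set E := hsync w₁.s w₂.s (w₁.θR ≫ w₂.θL) with hEdef
  obtain ⟨hmA, hmC, hex⟩ := E.choose_spec.1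
  have huniq := E.choose_spec.2
  set P := E.choose with hPdef
  obtain ⟨hB, hBeq⟩ := hex
  have key3 : (Groupoid.inv w₁.θR ≫ dBS.map P.2.2.1) ≫ eqToHom hB
      = w₂.θL ≫ dBT.map (Groupoid.inv P.2.2.2) := by
    rw [map_ginv]
    simp only [Groupoid.inv_eq_inv, Category.assoc, IsIso.inv_comp_eq, IsIso.eq_comp_inv]
    simpa [Category.assoc] using hBeq.symm
  refine ⟨⟨P.2.2.1, Groupoid.inv P.2.2.2⟩, ⟨rfl, rfl, key3, ?_⟩, ?_⟩
  · rw [map_ginv]; simp [Groupoid.inv_eq_inv]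
  · rintro ⟨ω, ν⟩ ⟨e1, e2, e3, e4⟩
    dsimp only at e1 e2 e3 e4
    have hdA : dA.map ω = dA.map P.2.2.1 := ((cancel_epi w₁.θL).mp e1).symm
    have hdBS : dBS.map ω = dBS.map P.2.2.1 := by
      rw [Groupoid.inv_eq_inv] at e2
      exact ((cancel_epi (CategoryTheory.inv w₁.θR)).mp e2).symm
    have hdBT : dBT.map ν = dBT.map (Groupoid.inv P.2.2.2) := by
      have h' : w₂.θL ≫ dBT.map ν = w₂.θL ≫ dBT.map (Groupoid.inv P.2.2.2) := by
        rw [← e3]; exact key3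
      exact (cancel_epi w₂.θL).mp h'
    have hdC : dC.map ν = dC.map (Groupoid.inv P.2.2.2) := by
      have h0 : (𝟙 _) ≫ w₂.θR = (dC.map ν ≫ dC.map P.2.2.2) ≫ w₂.θR := by
        simpa [Category.assoc] using e4
      have h1 : dC.map ν ≫ dC.map P.2.2.2 = 𝟙 _ := ((cancel_mono w₂.θR).mp h0).symm
      rw [map_ginv, Groupoid.inv_eq_inv]
      have := congrArg (· ≫ CategoryTheory.inv (dC.map P.2.2.2)) h1
      simpa [Category.assoc] using this
    have hνinv : dC.map (Groupoid.inv ν) = dC.map P.2.2.2 := by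
      rw [map_ginv, hdC, map_ginv]; simp [Groupoid.inv_eq_inv]
    have hνinvB : dBT.map (Groupoid.inv ν) = dBT.map P.2.2.2 := by
      rw [map_ginv, hdBT, map_ginv]; simp [Groupoid.inv_eq_inv]
    have hc : (⟨P.1, P.2.1, ω, Groupoid.inv ν⟩ :
        Σ (s' : S) (t' : T), (w₁.s ⟶ s') × (t' ⟶ w₂.s))
        = ⟨P.1, P.2.1, P.2.2.1, P.2.2.2⟩ := by
      apply huniq
      refine ⟨by rw [hdA]; exact hmA, by rw [hνinv]; exact hmC, hB, ?_⟩
      rw [hdBS, hνinvB]; exact hBeq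
    simp only [Sigma.mk.inj_iff, heq_eq_eq, Prod.mk.injEq, true_and] at hc
    obtain ⟨ha, hb⟩ := hc
    simp only [Prod.mk.injEq]
    exact ⟨ha, by rw [← hb]; simp [Groupoid.inv_eq_inv]⟩
end Compat

section Inv
variable {A B C S T : Type*} [Groupoid A] [Groupoid B] [Groupoid C] [Groupoid S] [Groupoid T]
  {Aneg : Subgroupoid A} {Bneg Bpos : Subgroupoid B} {Cpos : Subgroupoid C}
  {dA : S ⥤ A} {dBS : S ⥤ B} {dBT : T ⥤ B} {dC : T ⥤ C}
  {ahat : A} {bhat : B} {chat : C}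

theorem iwG_iwF (hBnw : Bneg.IsWide) (hBpw : Bpos.IsWide)
    (hsync : ∀ (s : S) (t : T) (θ : dBS.obj s ⟶ dBT.obj t),
      ∃! p : Σ (s' : S) (t' : T), (s ⟶ s') × (t' ⟶ t),
        dA.map p.2.2.1 ∈ Aneg.arrows _ _ ∧ dC.map p.2.2.2 ∈ Cpos.arrows _ _ ∧
        ∃ h : dBS.obj p.1 = dBT.obj p.2.1,
          θ = dBS.map p.2.2.1 ≫ eqToHom h ≫ dBT.map p.2.2.2)
    (hliftS : ∀ (s : S) (a : A) (b : B) (θA : a ⟶ dA.obj s) (θB : dBS.obj s ⟶ b),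
      θA ∈ Aneg.arrows _ _ → θB ∈ Bpos.arrows _ _ →
      ∀ (a' : A) (b' : B) (ΩA : a' ⟶ a) (ΩB : b ⟶ b'),
        ∃! p : Σ s' : S, (s ⟶ s') × (a' ⟶ dA.obj s') × (dBS.obj s' ⟶ b'),
          p.2.2.1 ∈ Aneg.arrows a' (dA.obj p.1) ∧ p.2.2.2 ∈ Bpos.arrows (dBS.obj p.1) b' ∧
          p.2.2.1 = ΩA ≫ θA ≫ dA.map p.2.1 ∧ θB ≫ ΩB = dBS.map p.2.1 ≫ p.2.2.2)
    (hliftT : ∀ (t : T) (b : B) (c : C) (θB : b ⟶ dBT.obj t) (θC : dC.obj t ⟶ c),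
      θB ∈ Bneg.arrows _ _ → θC ∈ Cpos.arrows _ _ →
      ∀ (b' : B) (c' : C) (ΩB : b' ⟶ b) (ΩC : c ⟶ c'),
        ∃! p : Σ t' : T, (t ⟶ t') × (b' ⟶ dBT.obj t') × (dC.obj t' ⟶ c'),
          p.2.2.1 ∈ Bneg.arrows b' (dBT.obj p.1) ∧ p.2.2.2 ∈ Cpos.arrows (dC.obj p.1) c' ∧
          p.2.2.1 = ΩB ≫ θB ≫ dBT.map p.2.1 ∧ θC ≫ ΩC = dC.map p.2.1 ≫ p.2.2.2)
    (w : SimWit Aneg Bpos dA dBS ahat bhat × SimWit Bneg Cpos dBT dC bhat chat) :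
    iwG Aneg Bneg Bpos Cpos dA dBS dBT dC ahat bhat chat hBnw hBpw hliftS hliftT
      (iwF Aneg Bneg Bpos Cpos dA dBS dBT dC ahat bhat chat hsync w) = w := by
  obtain ⟨w₁, w₂⟩ := w
  obtain ⟨⟨ω, ν⟩, ⟨e1, e2, e3, e4⟩, -⟩ := iwF_compat hsync w₁ w₂
  dsimp only at e1 e2 e3 e4
  revert ω ν
  generalize iwF Aneg Bneg Bpos Cpos dA dBS dBT dC ahat bhat chat hsync (w₁, w₂) = W
  intro ω ν e1 e2 e3 e4
  dsimp only [iwG]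
  refine Prod.ext ?_ ?_
  · set L₁ := hliftS W.s ahat (dBS.obj W.s) W.θA (𝟙 _) W.hA (hBpw.id_mem _)
      ahat bhat (𝟙 ahat) (Groupoid.inv W.Θ) with hL₁def
    have hc : (⟨w₁.s, Groupoid.inv ω, w₁.θL, w₁.θR⟩ :
        Σ s' : S, (W.s ⟶ s') × (ahat ⟶ dA.obj s') × (dBS.obj s' ⟶ bhat)) = L₁.choose := by
      apply L₁.choose_spec.2
      refine ⟨w₁.hL, w₁.hR, ?_, ?_⟩
      · rw [e1]; simp [map_ginv, Groupoid.inv_eq_inv]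
      · rw [e2]; simp [map_ginv, Groupoid.inv_eq_inv]
    obtain ⟨h1, hφ, hθL, hθR⟩ := sig3_ext hc
    refine SimWit.ext' (X := ⟨L₁.choose.1, L₁.choose.2.2.1, L₁.choose.2.2.2,
        L₁.choose_spec.1.1, L₁.choose_spec.1.2.1⟩) h1.symm ?_ ?_
    · dsimp only; simp only [hθL]; simp
    · dsimp only; simp only [hθR]
  · set L₂ := hliftT W.t (dBT.obj W.t) chat (𝟙 _) W.θC (hBnw.id_mem _) W.hC
      bhat chat (W.Θ ≫ eqToHom W.eqB) (𝟙 chat) with hL₂def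
    have hc : (⟨w₂.s, Groupoid.inv ν, w₂.θL, w₂.θR⟩ :
        Σ t' : T, (W.t ⟶ t') × (bhat ⟶ dBT.obj t') × (dC.obj t' ⟶ chat)) = L₂.choose := by
      apply L₂.choose_spec.2
      refine ⟨w₂.hL, w₂.hR, ?_, ?_⟩
      · dsimp only
        simp only [Category.id_comp, Category.assoc]
        rw [reassoc_of% e3]
        simp [map_ginv, Groupoid.inv_eq_inv]
      · rw [e4]; simp [map_ginv, Groupoid.inv_eq_inv]
    obtain ⟨h1, hψ, hθL, hθR⟩ := sig3_ext hc
    refine SimWit.ext' (X := ⟨L₂.choose.1, L₂.choose.2.2.1, L₂.choose.2.2.2,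
        L₂.choose_spec.1.1, L₂.choose_spec.1.2.1⟩) h1.symm ?_ ?_
    · dsimp only; simp only [hθL]; simp
    · dsimp only; simp only [hθR]
end Inv

section EqOf
variable {A B C S T : Type*} [Groupoid A] [Groupoid B] [Groupoid C] [Groupoid S] [Groupoid T]
  {Aneg : Subgroupoid A} {Bneg Bpos : Subgroupoid B} {Cpos : Subgroupoid C}
  {dA : S ⥤ A} {dBS : S ⥤ B} {dBT : T ⥤ B} {dC : T ⥤ C}
  {ahat : A} {bhat : B} {chat : C}

theorem iwF_eq_of
    (hsync : ∀ (s : S) (t : T) (θ : dBS.obj s ⟶ dBT.obj t),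
      ∃! p : Σ (s' : S) (t' : T), (s ⟶ s') × (t' ⟶ t),
        dA.map p.2.2.1 ∈ Aneg.arrows _ _ ∧ dC.map p.2.2.2 ∈ Cpos.arrows _ _ ∧
        ∃ h : dBS.obj p.1 = dBT.obj p.2.1,
          θ = dBS.map p.2.2.1 ≫ eqToHom h ≫ dBT.map p.2.2.2)
    (w₁ : SimWit Aneg Bpos dA dBS ahat bhat) (w₂ : SimWit Bneg Cpos dBT dC bhat chat)
    (V : SimIWit Aneg Cpos dA dBS dBT dC ahat bhat chat)
    (ω : w₁.s ⟶ V.s) (ν : w₂.s ⟶ V.t)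
    (e1 : V.θA = w₁.θL ≫ dA.map ω)
    (e2 : V.Θ = Groupoid.inv w₁.θR ≫ dBS.map ω)
    (e3 : V.Θ ≫ eqToHom V.eqB = w₂.θL ≫ dBT.map ν)
    (e4 : w₂.θR = dC.map ν ≫ V.θC) :
    iwF Aneg Bneg Bpos Cpos dA dBS dBT dC ahat bhat chat hsync (w₁, w₂) = V := by
  dsimp only [iwF]
  set E := hsync w₁.s w₂.s (w₁.θR ≫ w₂.θL) with hEdef
  have hω : dBS.map ω = w₁.θR ≫ V.Θ := by
    rw [e2]; simp [Groupoid.inv_eq_inv]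
  have hc : (⟨V.s, V.t, ω, Groupoid.inv ν⟩ :
      Σ (s' : S) (t' : T), (w₁.s ⟶ s') × (t' ⟶ w₂.s)) = E.choose := by
    apply E.choose_spec.2
    refine ⟨?_, ?_, V.eqB, ?_⟩
    · have : dA.map ω = Groupoid.inv w₁.θL ≫ V.θA := by
        rw [e1]; simp [Groupoid.inv_eq_inv]
      rw [this]; exact Aneg.mul (Aneg.inv w₁.hL) V.hA
    · have : dC.map (Groupoid.inv ν) = V.θC ≫ Groupoid.inv w₂.θR := by
        rw [map_ginv, e4]; simp [Groupoid.inv_eq_inv]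
      rw [this]; exact Cpos.mul V.hC (Cpos.inv w₂.hR)
    · rw [hω, Category.assoc, reassoc_of% e3]
      simp [map_ginv, Groupoid.inv_eq_inv]
  obtain ⟨h1, h2, hmor1, hmor2⟩ := sig2_ext hc
  refine SimIWit.ext' h1.symm h2.symm ?_ ?_ ?_
  · dsimp only
    simp only [hmor1]
    simp [eqToHom_map, e1]
  · dsimp only
    simp only [hmor1]
    simp [eqToHom_map, e2]
  · dsimp only
    simp only [hmor2]
    simp [eqToHom_map, map_ginv, Groupoid.inv_eq_inv, e4]
end EqOf

theorem iwF_iwG {A B C S T : Type*} [Groupoid A] [Groupoid B] [Groupoid C] [Groupoid S] [Groupoid T]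
    {Aneg : Subgroupoid A} {Bneg Bpos : Subgroupoid B} {Cpos : Subgroupoid C}
    {dA : S ⥤ A} {dBS : S ⥤ B} {dBT : T ⥤ B} {dC : T ⥤ C}
    {ahat : A} {bhat : B} {chat : C}
    (hBnw : Bneg.IsWide) (hBpw : Bpos.IsWide)
    (hsync : ∀ (s : S) (t : T) (θ : dBS.obj s ⟶ dBT.obj t),
      ∃! p : Σ (s' : S) (t' : T), (s ⟶ s') × (t' ⟶ t),
        dA.map p.2.2.1 ∈ Aneg.arrows _ _ ∧ dC.map p.2.2.2 ∈ Cpos.arrows _ _ ∧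
        ∃ h : dBS.obj p.1 = dBT.obj p.2.1,
          θ = dBS.map p.2.2.1 ≫ eqToHom h ≫ dBT.map p.2.2.2)
    (hliftS : ∀ (s : S) (a : A) (b : B) (θA : a ⟶ dA.obj s) (θB : dBS.obj s ⟶ b),
      θA ∈ Aneg.arrows _ _ → θB ∈ Bpos.arrows _ _ →
      ∀ (a' : A) (b' : B) (ΩA : a' ⟶ a) (ΩB : b ⟶ b'),
        ∃! p : Σ s' : S, (s ⟶ s') × (a' ⟶ dA.obj s') × (dBS.obj s' ⟶ b'),
          p.2.2.1 ∈ Aneg.arrows a' (dA.obj p.1) ∧ p.2.2.2 ∈ Bpos.arrows (dBS.obj p.1) b' ∧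
          p.2.2.1 = ΩA ≫ θA ≫ dA.map p.2.1 ∧ θB ≫ ΩB = dBS.map p.2.1 ≫ p.2.2.2)
    (hliftT : ∀ (t : T) (b : B) (c : C) (θB : b ⟶ dBT.obj t) (θC : dC.obj t ⟶ c),
      θB ∈ Bneg.arrows _ _ → θC ∈ Cpos.arrows _ _ →
      ∀ (b' : B) (c' : C) (ΩB : b' ⟶ b) (ΩC : c ⟶ c'),
        ∃! p : Σ t' : T, (t ⟶ t') × (b' ⟶ dBT.obj t') × (dC.obj t' ⟶ c'),
          p.2.2.1 ∈ Bneg.arrows b' (dBT.obj p.1) ∧ p.2.2.2 ∈ Cpos.arrows (dC.obj p.1) c' ∧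
          p.2.2.1 = ΩB ≫ θB ≫ dBT.map p.2.1 ∧ θC ≫ ΩC = dC.map p.2.1 ≫ p.2.2.2)
    (W : SimIWit Aneg Cpos dA dBS dBT dC ahat bhat chat) :
    iwF Aneg Bneg Bpos Cpos dA dBS dBT dC ahat bhat chat hsync
      (iwG Aneg Bneg Bpos Cpos dA dBS dBT dC ahat bhat chat hBnw hBpw hliftS hliftT W) = W := by
  set L₁ := hliftS W.s ahat (dBS.obj W.s) W.θA (𝟙 _) W.hA (hBpw.id_mem _)
    ahat bhat (𝟙 ahat) (Groupoid.inv W.Θ) with hL₁def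
  set L₂ := hliftT W.t (dBT.obj W.t) chat (𝟙 _) W.θC (hBnw.id_mem _) W.hC
    bhat chat (W.Θ ≫ eqToHom W.eqB) (𝟙 chat) with hL₂def
  have hGW : iwG Aneg Bneg Bpos Cpos dA dBS dBT dC ahat bhat chat hBnw hBpw hliftS hliftT W =
      (⟨L₁.choose.1, L₁.choose.2.2.1, L₁.choose.2.2.2, L₁.choose_spec.1.1, L₁.choose_spec.1.2.1⟩,
       ⟨L₂.choose.1, L₂.choose.2.2.1, L₂.choose.2.2.2, L₂.choose_spec.1.1,
        L₂.choose_spec.1.2.1⟩) := rfl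
  rw [hGW]
  obtain ⟨mA1, mB1, eA, eB⟩ := L₁.choose_spec.1
  obtain ⟨mB2, mC2, eB', eC⟩ := L₂.choose_spec.1
  simp only [Category.id_comp, Category.comp_id] at eA eB eB' eC
  refine iwF_eq_of hsync _ _ W (Groupoid.inv L₁.choose.2.1) (Groupoid.inv L₂.choose.2.1)
    ?_ ?_ ?_ ?_
  · dsimp only
    rw [eA]; simp [map_ginv, Groupoid.inv_eq_inv]
  · dsimp only
    simpa [Groupoid.inv_eq_inv, map_ginv] using congrArg Groupoid.inv eB
  · dsimp only
    rw [eB']; simp [map_ginv, Groupoid.inv_eq_inv]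
  · dsimp only
    rw [map_ginv, Groupoid.inv_eq_inv, IsIso.eq_inv_comp]
    exact eC.symm


/-- **The bijection between pairs of `∼`-witnesses and `∼`-interaction witnesses**
(composition of witnesses in the quantitative collapse of thin spans).  Under the
unique synchronization property (i) and the `∼`-witness lifting properties (ii), (iii),
there is a bijection `Υ : W_S × W_T ≃ W_{S,T}` compatible, via unique mediating
symmetries `ω : s ⟶ s'` and `ν : t ⟶ t'`, with all the structure. -/
theorem interaction_witness_bijection
    {A B C S T : Type*}
    [Groupoid A] [Groupoid B] [Groupoid C] [Groupoid S] [Groupoid T]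
    (Aneg : Subgroupoid A) (Bneg Bpos : Subgroupoid B) (Cpos : Subgroupoid C)
    (hAw : Aneg.IsWide) (hBnw : Bneg.IsWide) (hBpw : Bpos.IsWide) (hCw : Cpos.IsWide)
    (dA : S ⥤ A) (dBS : S ⥤ B) (dBT : T ⥤ B) (dC : T ⥤ C)
    (ahat : A) (bhat : B) (chat : C)
    -- (i) unique synchronization
    (hsync : ∀ (s : S) (t : T) (θ : dBS.obj s ⟶ dBT.obj t),
      ∃! p : Σ (s' : S) (t' : T), (s ⟶ s') × (t' ⟶ t),
        dA.map p.2.2.1 ∈ Aneg.arrows _ _ ∧ dC.map p.2.2.2 ∈ Cpos.arrows _ _ ∧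
        ∃ h : dBS.obj p.1 = dBT.obj p.2.1,
          θ = dBS.map p.2.2.1 ≫ eqToHom h ≫ dBT.map p.2.2.2)
    -- (ii) lifting property of S with respect to (A₋, B₊)
    (hliftS : ∀ (s : S) (a : A) (b : B) (θA : a ⟶ dA.obj s) (θB : dBS.obj s ⟶ b),
      θA ∈ Aneg.arrows _ _ → θB ∈ Bpos.arrows _ _ →
      ∀ (a' : A) (b' : B) (ΩA : a' ⟶ a) (ΩB : b ⟶ b'),
        ∃! p : Σ s' : S, (s ⟶ s') × (a' ⟶ dA.obj s') × (dBS.obj s' ⟶ b'),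
          p.2.2.1 ∈ Aneg.arrows a' (dA.obj p.1) ∧ p.2.2.2 ∈ Bpos.arrows (dBS.obj p.1) b' ∧
          p.2.2.1 = ΩA ≫ θA ≫ dA.map p.2.1 ∧ θB ≫ ΩB = dBS.map p.2.1 ≫ p.2.2.2)
    -- (iii) lifting property of T with respect to (B₋, C₊)
    (hliftT : ∀ (t : T) (b : B) (c : C) (θB : b ⟶ dBT.obj t) (θC : dC.obj t ⟶ c),
      θB ∈ Bneg.arrows _ _ → θC ∈ Cpos.arrows _ _ →
      ∀ (b' : B) (c' : C) (ΩB : b' ⟶ b) (ΩC : c ⟶ c'),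
        ∃! p : Σ t' : T, (t ⟶ t') × (b' ⟶ dBT.obj t') × (dC.obj t' ⟶ c'),
          p.2.2.1 ∈ Bneg.arrows b' (dBT.obj p.1) ∧ p.2.2.2 ∈ Cpos.arrows (dC.obj p.1) c' ∧
          p.2.2.1 = ΩB ≫ θB ≫ dBT.map p.2.1 ∧ θC ≫ ΩC = dC.map p.2.1 ≫ p.2.2.2) :
    ∃ Υ : (SimWit Aneg Bpos dA dBS ahat bhat × SimWit Bneg Cpos dBT dC bhat chat) ≃
        SimIWit Aneg Cpos dA dBS dBT dC ahat bhat chat,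
      ∀ (w₁ : SimWit Aneg Bpos dA dBS ahat bhat)
        (w₂ : SimWit Bneg Cpos dBT dC bhat chat),
        ∃! p : (w₁.s ⟶ (Υ (w₁, w₂)).s) × (w₂.s ⟶ (Υ (w₁, w₂)).t),
          (Υ (w₁, w₂)).θA = w₁.θL ≫ dA.map p.1 ∧
          (Υ (w₁, w₂)).Θ = Groupoid.inv w₁.θR ≫ dBS.map p.1 ∧
          (Υ (w₁, w₂)).Θ ≫ eqToHom (Υ (w₁, w₂)).eqB = w₂.θL ≫ dBT.map p.2 ∧
          w₂.θR = dC.map p.2 ≫ (Υ (w₁, w₂)).θC := by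
  refine ⟨⟨iwF Aneg Bneg Bpos Cpos dA dBS dBT dC ahat bhat chat hsync,
    iwG Aneg Bneg Bpos Cpos dA dBS dBT dC ahat bhat chat hBnw hBpw hliftS hliftT,
    iwG_iwF hBnw hBpw hsync hliftS hliftT,
    iwF_iwG hBnw hBpw hsync hliftS hliftT⟩, ?_⟩
  intro w₁ w₂
  exact iwF_compat hsync w₁ w₂
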